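/- Let f : A → B be a finite homomorphism of commutative rings (i.e., B is finitely generated as an A-module via f). Then for every ideal J of B, the ring A⋈^f J is Noetherian if and only if A is Noetherian. -/

import Mathlib

/-- The amalgamation `A ⋈^f J = {(a, f a + j) | a ∈ A, j ∈ J}` of `A` with `B`
along the ideal `J` of `B`, with respect to the ring homomorphism `f : A → B`,
as a subring of the product ring `A × B`. -/
def amalgamation {A B : Type*} [CommRing A] [CommRing B] (f : A →+* B) (J : Ideal B) :
    Subring (A × B) where
  carrier := {x : A × B | ∃ a : A, ∃ j ∈ J, x = (a, f a + j)}
  one_mem' := ⟨1, 0, J.zero_mem, by ext <;> simp⟩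
  zero_mem' := ⟨0, 0, J.zero_mem, by ext <;> simp⟩
  mul_mem' := by
    rintro x y ⟨a, j, hj, rfl⟩ ⟨c, k, hk, rfl⟩
    refine ⟨a * c, f a * k + j * f c + j * k,
      J.add_mem (J.add_mem (J.mul_mem_left _ hk) (J.mul_mem_right _ hj)) (J.mul_mem_right _ hj),
      ?_⟩
    simp only [Prod.mk_mul_mk, map_mul, Prod.mk.injEq]
    exact ⟨trivial, by ring⟩
  add_mem' := by
    rintro x y ⟨a, j, hj, rfl⟩ ⟨c, k, hk, rfl⟩
    refine ⟨a + c, j + k, J.add_mem hj hk, ?_⟩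
    simp only [Prod.mk_add_mk, map_add, Prod.mk.injEq]
    exact ⟨trivial, by ring⟩
  neg_mem' := by
    rintro x ⟨a, j, hj, rfl⟩
    refine ⟨-a, -j, J.neg_mem hj, ?_⟩
    simp only [Prod.neg_mk, map_neg, Prod.mk.injEq]
    exact ⟨trivial, by ring⟩

theorem statement9 {A B : Type*} [CommRing A] [CommRing B] (f : A →+* B)
    (hf : f.Finite) :
    ∀ J : Ideal B, (IsNoetherianRing ↥(amalgamation f J) ↔ IsNoetherianRing A) := by
  intro J
  constructor
  · intro h
    refine isNoetherianRing_of_surjective _ A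
      ((RingHom.fst A B).comp (amalgamation f J).subtype) ?_
    intro a
    exact ⟨⟨(a, f a), a, 0, J.zero_mem, by simp⟩, rfl⟩
  · intro hA
    letI : Algebra A B := f.toAlgebra
    haveI : Module.Finite A B := hf
    haveI : IsNoetherian A B := isNoetherian_of_isNoetherianRing_of_finite A B
    haveI : IsNoetherian A A := by rwa [isNoetherianRing_iff] at hA
    let ι : A →+* amalgamation f J :=
    { toFun := fun a => ⟨(a, f a), a, 0, J.zero_mem, by simp⟩
      map_one' := by ext <;> simp
      map_mul' := fun a b => by ext <;> simp
      map_zero' := by ext <;> simp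
      map_add' := fun a b => by ext <;> simp }
    letI : Algebra A ↥(amalgamation f J) := ι.toAlgebra
    have hl : ∀ (a : A) (x : ↥(amalgamation f J)),
        ((a • x : ↥(amalgamation f J)) : A × B) = a • (x : A × B) := by
      intro a x
      show ((ι a * x : ↥(amalgamation f J)) : A × B) = _
      ext
      · exact (smul_eq_mul _ _).symm
      · rfl
    let l : ↥(amalgamation f J) →ₗ[A] A × B :=
    { toFun := Subtype.val
      map_add' := fun _ _ => rfl
      map_smul' := hl }
    haveI : IsNoetherian A ↥(amalgamation f J) :=
      isNoetherian_of_injective l Subtype.val_injective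
    exact isNoetherian_of_tower A this
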